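/- Let G be a group and ρ : G → G a bijection such that the expression σ(x) := ρ(y)⁻¹ · ρ(ρ(x) · ρ(xy)⁻¹) is independent of y, i.e. there is a map σ : G → G with ρ(y)⁻¹ · ρ(ρ(x) · ρ(xy)⁻¹) = σ(x) for all x,y ∈ G. Then the map s : G × G → G × G defined by s(x,y) = (xy, ρ(x)·ρ(xy)⁻¹) is a set-theoretical solution of the pentagon equation, and its inverse is given by s⁻¹(x,y) = (ρ⁻¹(y·ρ(x)), ρ⁻¹(y·ρ(x))⁻¹·x). -/

import Mathlib

/-- The map acting as `s` on coordinates 1 and 2 of `M × M × M`. -/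
def map12 {M : Type*} (s : M × M → M × M) : M × M × M → M × M × M :=
  fun p => ((s (p.1, p.2.1)).1, (s (p.1, p.2.1)).2, p.2.2)

/-- The map acting as `s` on coordinates 1 and 3 of `M × M × M`. -/
def map13 {M : Type*} (s : M × M → M × M) : M × M × M → M × M × M :=
  fun p => ((s (p.1, p.2.2)).1, p.2.1, (s (p.1, p.2.2)).2)

/-- The map acting as `s` on coordinates 2 and 3 of `M × M × M`. -/
def map23 {M : Type*} (s : M × M → M × M) : M × M × M → M × M × M :=
  fun p => (p.1, s p.2)

/-- let `G` be a group and `ρ : G → G` a bijection such that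
`σ(x) := ρ(y)⁻¹ · ρ(ρ(x)·ρ(xy)⁻¹)` is independent of `y`. Then
`s(x,y) = (xy, ρ(x)·ρ(xy)⁻¹)` is a set-theoretical solution of the pentagon
equation, whose inverse is `(x,y) ↦ (ρ⁻¹(y·ρ(x)), ρ⁻¹(y·ρ(x))⁻¹·x)`. -/
theorem stmt4 {G : Type*} [Group G] (ρ : G ≃ G) (σ : G → G)
    (hσ : ∀ x y : G, (ρ y)⁻¹ * ρ (ρ x * (ρ (x * y))⁻¹) = σ x)
    (s : G × G → G × G)
    (hs : ∀ x y : G, s (x, y) = (x * y, ρ x * (ρ (x * y))⁻¹)) :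
    (Function.Bijective s ∧
        map23 s ∘ map13 s ∘ map12 s = map12 s ∘ map23 s) ∧
    Function.LeftInverse
      (fun p : G × G => (ρ.symm (p.2 * ρ p.1), (ρ.symm (p.2 * ρ p.1))⁻¹ * p.1)) s ∧
    Function.RightInverse
      (fun p : G × G => (ρ.symm (p.2 * ρ p.1), (ρ.symm (p.2 * ρ p.1))⁻¹ * p.1)) s := by
  have hρ : ∀ x y : G, ρ (ρ x * (ρ (x * y))⁻¹) = ρ y * σ x := by
    intro x y
    rw [← hσ x y]; group
  have hli : Function.LeftInverse
      (fun p : G × G => (ρ.symm (p.2 * ρ p.1), (ρ.symm (p.2 * ρ p.1))⁻¹ * p.1)) s := by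
    rintro ⟨x, y⟩
    simp only [hs x y]
    have : ρ x * (ρ (x * y))⁻¹ * ρ (x * y) = ρ x := by group
    simp [this]
  have hri : Function.RightInverse
      (fun p : G × G => (ρ.symm (p.2 * ρ p.1), (ρ.symm (p.2 * ρ p.1))⁻¹ * p.1)) s := by
    rintro ⟨x, y⟩
    simp only [hs]
    have h1 : ρ.symm (y * ρ x) * ((ρ.symm (y * ρ x))⁻¹ * x) = x := by group
    rw [h1]
    have h2 : ρ (ρ.symm (y * ρ x)) = y * ρ x := ρ.apply_symm_apply _
    rw [h2]
    ext <;> simp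
  refine ⟨⟨⟨hli.injective, hri.surjective⟩, ?_⟩, hli, hri⟩
  funext ⟨x, y, z⟩
  simp only [Function.comp_apply, map12, map13, map23, hs]
  have e1 : x * y * z = x * (y * z) := by group
  ext <;> simp [hs, e1]
  rw [hρ x y, hρ x (y * z)]
  group
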